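/- Let γ_ℓ = π(1 - 1/ℓ) and β(α,γ) = 2·arcsin(sin α sin(γ/2)). Then ℓ² · ∂²β/∂α²(2π/3, γ_ℓ) → -2√3·π² as ℓ → ∞. -/

import Mathlib

open Real Filter

noncomputable def β (α γ : ℝ) : ℝ := 2 * Real.arcsin (Real.sin α * Real.sin (γ / 2))

lemma sin_two_pi_div_three' : Real.sin (2*π/3) = Real.sqrt 3 / 2 := by
  rw [show (2*π/3 : ℝ) = π - π/3 by ring, Real.sin_pi_sub, Real.sin_pi_div_three]

lemma cos_two_pi_div_three' : Real.cos (2*π/3) = -(1/2) := by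
  rw [show (2*π/3 : ℝ) = π - π/3 by ring, Real.cos_pi_sub, Real.cos_pi_div_three]

lemma aux_sin_sq_lt {α : ℝ} (hα : α ∈ Set.Ioo (π/2) π) : Real.sin α ^ 2 < 1 := by
  have hc : Real.cos α < 0 :=
    Real.cos_neg_of_pi_div_two_lt_of_lt hα.1 (by nlinarith [hα.2, Real.pi_pos])
  nlinarith [Real.sin_sq_add_cos_sq α]

lemma aux_first_deriv (c : ℝ) (hc : |c| ≤ 1) {α : ℝ} (hα : α ∈ Set.Ioo (π/2) π) :
    HasDerivAt (fun a => 2 * Real.arcsin (Real.sin a * c))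
      (2 * (1 / Real.sqrt (1 - (Real.sin α * c)^2) * (Real.cos α * c))) α := by
  have hlt : |Real.sin α * c| < 1 := by
    rw [abs_mul]
    calc |Real.sin α| * |c| ≤ |Real.sin α| * 1 :=
          mul_le_mul_of_nonneg_left hc (abs_nonneg _)
      _ = |Real.sin α| := mul_one _
      _ < 1 := by
          rw [← Real.sqrt_one, show |Real.sin α| = Real.sqrt (Real.sin α ^2) by
            rw [Real.sqrt_sq_eq_abs]]
          exact Real.sqrt_lt_sqrt (sq_nonneg _) (by simpa using aux_sin_sq_lt hα)
  have h1 : Real.sin α * c ≠ -1 := by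
    intro h; rw [h] at hlt; simp at hlt
  have h2 : Real.sin α * c ≠ 1 := by
    intro h; rw [h] at hlt; simp at hlt
  exact ((Real.hasDerivAt_arcsin h1 h2).comp α
    ((Real.hasDerivAt_sin α).mul_const c)).const_mul 2

lemma aux_second_deriv (c : ℝ) (hc : |c| ≤ 1) :
    HasDerivAt (fun a => 2 * (1 / Real.sqrt (1 - (Real.sin a * c)^2) * (Real.cos a * c)))
      (-Real.sqrt 3 * c * (1 - c^2) / (Real.sqrt (1 - 3*c^2/4))^3) (2*π/3) := by
  have h3 : Real.sqrt 3 ^ 2 = 3 := Real.sq_sqrt (by norm_num)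
  have hc2 : c^2 ≤ 1 := by nlinarith [abs_nonneg c, sq_abs c]
  set x : ℝ := 2*π/3 with hx
  have hsin : Real.sin x = Real.sqrt 3 / 2 := sin_two_pi_div_three'
  have hcos : Real.cos x = -(1/2) := cos_two_pi_div_three'
  have hu : HasDerivAt (fun a => 1 - (Real.sin a * c)^2)
      (-( 2 * (Real.sin x * c)^1 * (Real.cos x * c))) x :=
    ((((Real.hasDerivAt_sin x).mul_const c).pow 2)).const_sub 1
  have huval : 1 - (Real.sin x * c)^2 = 1 - 3*c^2/4 := by
    rw [hsin]; field_simp; ring_nf; nlinarith [h3]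
  have hupos : 0 < 1 - (Real.sin x * c)^2 := by rw [huval]; nlinarith
  have hsqrt := hu.sqrt hupos.ne'
  have hsq : Real.sqrt (1 - (Real.sin x * c)^2) = Real.sqrt (1 - 3*c^2/4) := by rw [huval]
  have hspos : 0 < Real.sqrt (1 - 3*c^2/4) := Real.sqrt_pos.mpr (by nlinarith)
  have hs2 : Real.sqrt (1 - 3*c^2/4) ^ 2 = 1 - 3*c^2/4 := Real.sq_sqrt (by nlinarith)
  have hinv := hsqrt.inv (by rw [hsq]; exact hspos.ne')
  have hmul := (hinv.mul ((Real.hasDerivAt_cos x).mul_const c)).const_mul 2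
  simp only [one_div]
  convert hmul using 1
  · rfl
  · rfl
  · rfl
  simp only [Pi.inv_apply]
  rw [hsin, hcos, show (1:ℝ) - (Real.sqrt 3/2*c)^2 = 1 - 3*c^2/4 by nlinarith [h3]]
  set s := Real.sqrt (1 - 3*c^2/4) with hsdef
  have hsne := hspos.ne'
  field_simp
  ring_nf
  linear_combination (4*c) * hs2

lemma deriv2_eq (c : ℝ) (hc : |c| ≤ 1) :
    deriv (deriv (fun a => 2 * Real.arcsin (Real.sin a * c))) (2*π/3)
      = -Real.sqrt 3 * c * (1 - c^2) / (Real.sqrt (1 - 3*c^2/4))^3 := by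
  have hmem : (2*π/3 : ℝ) ∈ Set.Ioo (π/2) π := by
    constructor <;> nlinarith [Real.pi_pos]
  have hop : Set.Ioo (π/2) π ∈ nhds (2*π/3 : ℝ) := Ioo_mem_nhds hmem.1 hmem.2
  have hev : deriv (fun a => 2 * Real.arcsin (Real.sin a * c))
      =ᶠ[nhds (2*π/3 : ℝ)]
      (fun a => 2 * (1 / Real.sqrt (1 - (Real.sin a * c)^2) * (Real.cos a * c))) := by
    filter_upwards [hop] with a ha
    exact (aux_first_deriv c hc ha).deriv
  rw [hev.deriv_eq]
  exact (aux_second_deriv c hc).deriv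

theorem limit_second_deriv_beta_alpha :
    Tendsto (fun ℓ : ℕ =>
        (ℓ : ℝ) ^ 2 * deriv (deriv (fun α => β α (π * (1 - 1 / ℓ)))) (2 * π / 3))
      atTop (nhds (-(2 * Real.sqrt 3 * π ^ 2))) := by
  set c : ℕ → ℝ := fun ℓ => Real.sin (π * (1 - 1 / ℓ) / 2) with hcdef
  have hcabs : ∀ ℓ : ℕ, |c ℓ| ≤ 1 := fun ℓ =>
    abs_le.mpr ⟨Real.neg_one_le_sin _, Real.sin_le_one _⟩
  have key : ∀ ℓ : ℕ, deriv (deriv (fun α => β α (π * (1 - 1 / (ℓ:ℝ))))) (2 * π / 3)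
      = -Real.sqrt 3 * c ℓ * (1 - (c ℓ)^2) / (Real.sqrt (1 - 3*(c ℓ)^2/4))^3 := by
    intro ℓ
    have hfun : (fun α => β α (π * (1 - 1 / (ℓ:ℝ))))
        = (fun a => 2 * Real.arcsin (Real.sin a * c ℓ)) := rfl
    rw [hfun]
    exact deriv2_eq (c ℓ) (hcabs ℓ)
  -- limit of c ℓ
  have h0 : Tendsto (fun ℓ : ℕ => (1 / ℓ : ℝ)) atTop (nhds 0) :=
    tendsto_one_div_atTop_nhds_zero_nat
  have harg : Tendsto (fun ℓ : ℕ => π * (1 - 1 / (ℓ:ℝ)) / 2) atTop (nhds (π/2)) := by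
    have hcont : Continuous (fun t : ℝ => π * (1 - t) / 2) := by continuity
    have := (hcont.continuousAt (x := 0)).tendsto.comp h0
    simpa [Function.comp_def] using this
  have hc1 : Tendsto (fun ℓ : ℕ => c ℓ) atTop (nhds 1) := by
    have h := (Real.continuous_sin.continuousAt (x := π/2)).tendsto.comp harg
    simp only [Function.comp_def] at h
    rw [Real.sin_pi_div_two] at h
    exact h
  -- ℓ * sin (π/(2ℓ)) → π/2
  have hslope : Tendsto (fun t : ℝ => Real.sin t / t) (nhdsWithin 0 {(0:ℝ)}ᶜ) (nhds 1) := by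
    have := hasDerivAt_iff_tendsto_slope.mp (Real.hasDerivAt_sin 0)
    simp only [slope_fun_def, vsub_eq_sub, smul_eq_mul, Real.sin_zero, sub_zero,
      Real.cos_zero] at this
    exact this.congr (fun t => (div_eq_inv_mul _ _).symm)
  have hxx : Tendsto (fun ℓ : ℕ => π / (2 * ℓ) : ℕ → ℝ) atTop (nhdsWithin 0 {(0:ℝ)}ᶜ) := by
    apply tendsto_nhdsWithin_of_tendsto_nhds_of_eventually_within
    · have : (fun ℓ : ℕ => π / (2 * ℓ) : ℕ → ℝ) = fun ℓ : ℕ => (π/2) * (1/ℓ) := by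
        funext ℓ; ring
      rw [this]
      simpa using h0.const_mul (π/2)
    · filter_upwards [eventually_ge_atTop 1] with ℓ hℓ
      have hℓpos : (0:ℝ) < ℓ := by exact_mod_cast hℓ
      have : (0:ℝ) < π / (2 * ℓ) := div_pos Real.pi_pos (by linarith)
      exact Set.mem_compl_singleton_iff.mpr this.ne'
  have hsd : Tendsto (fun ℓ : ℕ => Real.sin (π / (2 * ℓ)) / (π / (2 * ℓ))) atTop (nhds 1) :=
    hslope.comp hxx
  have hns : Tendsto (fun ℓ : ℕ => (ℓ:ℝ) * Real.sin (π / (2 * ℓ))) atTop (nhds (π/2)) := by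
    have h := hsd.const_mul (π/2)
    rw [mul_one] at h
    apply h.congr'
    filter_upwards [eventually_ge_atTop 1] with ℓ hℓ
    have hℓne : (ℓ:ℝ) ≠ 0 := by positivity
    have hpne : (π:ℝ) ≠ 0 := Real.pi_ne_zero
    field_simp
  -- ℓ² (1 - c²) → π²/4
  have hident : ∀ ℓ : ℕ, (ℓ:ℝ)^2 * (1 - (c ℓ)^2) = ((ℓ:ℝ) * Real.sin (π / (2 * ℓ)))^2 := by
    intro ℓ
    have hang : π * (1 - 1 / (ℓ:ℝ)) / 2 = π/2 - π / (2 * ℓ) := by ring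
    have : c ℓ = Real.cos (π / (2 * ℓ)) := by
      rw [hcdef]; simp only []; rw [hang, Real.sin_pi_div_two_sub]
    rw [this, ← Real.sin_sq]
    ring
  have h2 : Tendsto (fun ℓ : ℕ => (ℓ:ℝ)^2 * (1 - (c ℓ)^2)) atTop (nhds (π^2/4)) := by
    have := hns.mul hns
    have heq : (fun ℓ : ℕ => (ℓ:ℝ)^2 * (1 - (c ℓ)^2))
        = fun ℓ : ℕ => ((ℓ:ℝ) * Real.sin (π / (2 * ℓ))) * ((ℓ:ℝ) * Real.sin (π / (2 * ℓ))) := by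
      funext ℓ; rw [hident ℓ]; ring
    rw [heq]
    convert this using 2
    ring
  -- continuous factor
  have hhalf : Real.sqrt (1 - 3*(1:ℝ)^2/4) = 1/2 := by
    rw [show (1:ℝ) - 3*(1:ℝ)^2/4 = (1/2)^2 by norm_num]
    exact Real.sqrt_sq (by norm_num)
  have hF : ContinuousAt (fun y : ℝ => -Real.sqrt 3 * y / (Real.sqrt (1 - 3*y^2/4))^3) 1 := by
    apply ContinuousAt.div
    · fun_prop
    · exact ((Real.continuous_sqrt.comp (by continuity)).pow 3).continuousAt
    · simp only [hhalf]; norm_num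
  have h3 : Tendsto (fun ℓ : ℕ => -Real.sqrt 3 * c ℓ / (Real.sqrt (1 - 3*(c ℓ)^2/4))^3)
      atTop (nhds (-Real.sqrt 3 * 1 / (Real.sqrt (1 - 3*(1:ℝ)^2/4))^3)) := by
    have h := hF.tendsto.comp hc1
    simp only [Function.comp_def] at h
    exact h
  rw [hhalf] at h3
  have hfinal := h3.mul h2
  have hlim : (-Real.sqrt 3 * 1 / ((1/2:ℝ))^3) * (π^2/4) = -(2 * Real.sqrt 3 * π^2) := by
    norm_num; ring
  rw [hlim] at hfinal
  apply hfinal.congr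
  intro ℓ
  rw [key ℓ]
  ring
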